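/- Let A ∈ ℝ^{(n-n_b)×n_b} be an aggregation matrix and suppose the joint forecast Ŷ = (Û, B̂) ∈ ℝⁿ follows a multivariate t-distribution mt(ŷ, Ψ̂, ν̂), with ŷ = (û, b̂) and Ψ̂ partitioned into blocks Ψ_U, Ψ_{UB}, Ψ_{BU} = Ψ_{UB}ᵀ, Ψ_B. Then the conditional distribution of B̂ given Û - A B̂ = 0 is the multivariate t-distribution mt(b̃, Σ̃_B, ν̃) with b̃ = b̂ + (Ψ_{UB}ᵀ - Ψ_B Aᵀ) Q⁻¹ (A b̂ - û), Σ̃_B = C·[Ψ_B - (Ψ_{UB}ᵀ - Ψ_B Aᵀ) Q⁻¹ (Ψ_{UB}ᵀ - Ψ_B Aᵀ)ᵀ], ν̃ = ν̂ + n - n_b, where C = (ν̂ + (A b̂ - û)ᵀ Q⁻¹ (A b̂ - û))/(ν̂ + n - n_b) and Q = Ψ_U - Ψ_{UB} Aᵀ - A Ψ_{UB}ᵀ + A Ψ_B Aᵀ. -/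

import Mathlib

open Matrix MeasureTheory Real

noncomputable def mtPdf {ι : Type*} [Fintype ι] [DecidableEq ι]
    (μ : ι → ℝ) (S : Matrix ι ι ℝ) (ν : ℝ) (x : ι → ℝ) : ℝ :=
  Real.Gamma ((ν + Fintype.card ι) / 2) /
      (Real.Gamma (ν / 2) * (ν * Real.pi) ^ ((Fintype.card ι : ℝ) / 2) * Real.sqrt S.det) *
    (1 + (x - μ) ⬝ᵥ (S⁻¹ *ᵥ (x - μ)) / ν) ^ (-((ν + Fintype.card ι) / 2))

lemma posDef_conj_aux {n : Type*} [Fintype n] [DecidableEq n]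
    {Ψ : Matrix n n ℝ} (hΨ : Ψ.PosDef) {S : Matrix n n ℝ} (hS : IsUnit S.det) :
    (S * Ψ * Sᵀ).PosDef := by
  rw [Matrix.posDef_iff_dotProduct_mulVec]
  constructor
  · have h := hΨ.1
    simp only [Matrix.IsHermitian, Matrix.conjTranspose_eq_transpose_of_trivial] at h ⊢
    rw [Matrix.transpose_mul, Matrix.transpose_mul, Matrix.transpose_transpose, h,
      Matrix.mul_assoc]
  · intro x hx
    have hxS : x ᵥ* S ≠ 0 := by
      intro h
      apply hx
      have hinj : Function.Injective S.vecMul := by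
        rw [Matrix.vecMul_injective_iff_isUnit]
        exact (Matrix.isUnit_iff_isUnit_det _).2 hS
      have := hinj (a₁ := x) (a₂ := 0) (by simpa using h)
      simpa using this
    have hq : star x ⬝ᵥ ((S * Ψ * Sᵀ) *ᵥ x) = star (x ᵥ* S) ⬝ᵥ (Ψ *ᵥ (x ᵥ* S)) := by
      simp only [star_trivial, ← Matrix.mulVec_mulVec, Matrix.dotProduct_mulVec,
        Matrix.mulVec_transpose]
    rw [hq]
    exact hΨ.dotProduct_mulVec_pos hxS

lemma posDef_toBlocks₁₁ {m n : Type*} [Fintype m] [DecidableEq m] [Fintype n] [DecidableEq n]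
    {M : Matrix m m ℝ} {B : Matrix m n ℝ} {C : Matrix n m ℝ} {D : Matrix n n ℝ}
    (h : (Matrix.fromBlocks M B C D).PosDef) : M.PosDef := by
  rw [Matrix.posDef_iff_dotProduct_mulVec]
  constructor
  · exact (Matrix.isHermitian_fromBlocks_iff.mp h.1).1
  · intro x hx
    have hne : (Sum.elim x (0 : n → ℝ)) ≠ 0 := by
      intro hc; apply hx; funext i; exact congrFun hc (Sum.inl i)
    have := h.dotProduct_mulVec_pos hne
    simpa [Matrix.fromBlocks_mulVec, sumElim_dotProduct_sumElim] using this

lemma schur_posDef {m n : Type*} [Fintype m] [DecidableEq m] [Fintype n] [DecidableEq n]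
    {M : Matrix m m ℝ} {B : Matrix m n ℝ} {D : Matrix n n ℝ}
    (h : (Matrix.fromBlocks M B Bᴴ D).PosDef) : (D - Bᴴ * M⁻¹ * B).PosDef := by
  have hM : M.PosDef := posDef_toBlocks₁₁ h
  haveI : Invertible M := hM.isUnit.invertible
  rw [Matrix.posDef_iff_dotProduct_mulVec]
  constructor
  · exact (Matrix.IsHermitian.fromBlocks₁₁ B D hM.1).mp h.1
  · intro y hy
    have hne : (Sum.elim (-((M⁻¹ * B) *ᵥ y)) y) ≠ 0 := by
      intro hc; apply hy; funext i; exact congrFun hc (Sum.inr i)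
    have h2 := h.dotProduct_mulVec_pos hne
    rw [Matrix.dotProduct_mulVec, Matrix.schur_complement_eq₁₁ B D _ _ hM.1,
      neg_add_cancel] at h2
    simpa [Matrix.dotProduct_mulVec] using h2


/-- Reconciliation via conditioning of a multivariate t base forecast
`(Û, B̂) ~ mt((û, b̂), Ψ̂, ν̂)`: the conditional distribution of `B̂` given `Û - A B̂ = 0`
(whose density is proportional to the joint density evaluated at `(A b, b)`)
is the multivariate t `mt(b̃, Σ̃_B, ν̃)` with the MinT-like location `b̃`, scale
`Σ̃_B = C·[Ψ_B - (Ψ_{UB}ᵀ - Ψ_B Aᵀ) Q⁻¹ (Ψ_{UB}ᵀ - Ψ_B Aᵀ)ᵀ]` and `ν̃ = ν̂ + n - n_b`. -/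
theorem t_reconciliation_via_conditioning
    {ιu ιb : Type*} [Fintype ιu] [DecidableEq ιu] [Fintype ιb] [DecidableEq ιb]
    (A : Matrix ιu ιb ℝ) (uhat : ιu → ℝ) (bhat : ιb → ℝ)
    (ΨU : Matrix ιu ιu ℝ) (ΨUB : Matrix ιu ιb ℝ) (ΨB : Matrix ιb ιb ℝ)
    (νhat : ℝ) (hν : 0 < νhat)
    (hpd : (Matrix.fromBlocks ΨU ΨUB ΨUBᵀ ΨB).PosDef)
    (Q : Matrix ιu ιu ℝ) (hQ : Q = ΨU - ΨUB * Aᵀ - A * ΨUBᵀ + A * ΨB * Aᵀ)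
    (btilde : ιb → ℝ)
    (hb : btilde = bhat + (ΨUBᵀ - ΨB * Aᵀ) *ᵥ (Q⁻¹ *ᵥ (A *ᵥ bhat - uhat)))
    (C : ℝ)
    (hC : C = (νhat + (A *ᵥ bhat - uhat) ⬝ᵥ (Q⁻¹ *ᵥ (A *ᵥ bhat - uhat)))
              / (νhat + Fintype.card ιu))
    (SigTilde : Matrix ιb ιb ℝ)
    (hSig : SigTilde = C • (ΨB - (ΨUBᵀ - ΨB * Aᵀ) * Q⁻¹ * (ΨUBᵀ - ΨB * Aᵀ)ᵀ)) :
    ∃ c > 0, ∀ b : ιb → ℝ,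
      mtPdf (Sum.elim uhat bhat) (Matrix.fromBlocks ΨU ΨUB ΨUBᵀ ΨB) νhat
          (Sum.elim (A *ᵥ b) b)
        = c * mtPdf btilde SigTilde (νhat + Fintype.card ιu) b := by
  classical
  set Ψ := Matrix.fromBlocks ΨU ΨUB ΨUBᵀ ΨB with hΨdef
  have hΨBsymm : ΨBᵀ = ΨB := by
    have h := (Matrix.isHermitian_fromBlocks_iff.mp hpd.1).2.2.2
    simpa [Matrix.IsHermitian, Matrix.conjTranspose_eq_transpose_of_trivial] using h
  set R : Matrix ιb ιu ℝ := ΨUBᵀ - ΨB * Aᵀ with hRdef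
  set d : ιu → ℝ := A *ᵥ bhat - uhat with hd
  set S : Matrix (ιu ⊕ ιb) (ιu ⊕ ιb) ℝ :=
    Matrix.fromBlocks 1 (-A) 0 1 with hSdef
  have hZ : S * Ψ * Sᵀ = Matrix.fromBlocks Q Rᵀ R ΨB := by
    rw [hSdef, hΨdef, Matrix.fromBlocks_transpose, Matrix.fromBlocks_multiply,
      Matrix.fromBlocks_multiply]
    simp only [Matrix.one_mul, Matrix.mul_one, Matrix.neg_mul, Matrix.mul_neg,
      Matrix.zero_mul, Matrix.mul_zero, Matrix.transpose_neg, Matrix.transpose_one,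
      Matrix.transpose_zero, add_zero, zero_add, Matrix.transpose_sub, Matrix.transpose_mul,
      Matrix.transpose_transpose, hΨBsymm, hQ, hRdef]
    rw [Matrix.fromBlocks_inj]
    refine ⟨?_, ?_, rfl, rfl⟩
    · rw [Matrix.add_mul, Matrix.neg_mul]; abel
    · abel
  have hSdet : S.det = 1 := by
    rw [hSdef]; rw [Matrix.det_fromBlocks_zero₂₁]; simp
  have hSunit : IsUnit S.det := by rw [hSdet]; exact isUnit_one
  have hZpd : (Matrix.fromBlocks Q Rᵀ R ΨB).PosDef := hZ ▸ posDef_conj_aux hpd hSunit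
  have hQpd : Q.PosDef := posDef_toBlocks₁₁ hZpd
  have hRH : (Rᵀ)ᴴ = R := by
    simp [Matrix.conjTranspose_eq_transpose_of_trivial]
  set Sg : Matrix ιb ιb ℝ := ΨB - R * Q⁻¹ * Rᵀ with hSgdef
  have hSgpd : Sg.PosDef := by
    have h' : (Matrix.fromBlocks Q Rᵀ (Rᵀ)ᴴ ΨB).PosDef := by rwa [hRH]
    have := schur_posDef h'
    rwa [hRH] at this
  haveI : Invertible Q := hQpd.isUnit.invertible
  haveI : Invertible Sg := hSgpd.isUnit.invertible
  have hQunit : IsUnit Q.det := hQpd.det_pos.ne'.isUnit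
  have hSgunit : IsUnit Sg.det := hSgpd.det_pos.ne'.isUnit
  have hZunit : IsUnit (Matrix.fromBlocks Q Rᵀ R ΨB).det := hZpd.det_pos.ne'.isUnit
  have hQs : Q⁻¹ᵀ = Q⁻¹ := by
    rw [Matrix.transpose_nonsing_inv]
    congr 1
    simpa [Matrix.IsHermitian, Matrix.conjTranspose_eq_transpose_of_trivial] using hQpd.1
  set α : ℝ := d ⬝ᵥ Q⁻¹ *ᵥ d with hα
  have hα0 : 0 ≤ α := by
    simpa using hQpd.inv.posSemidef.dotProduct_mulVec_nonneg d
  have hΨinv : Ψ⁻¹ = Sᵀ * (Matrix.fromBlocks Q Rᵀ R ΨB)⁻¹ * S := by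
    rw [← hZ, Matrix.mul_inv_rev, Matrix.mul_inv_rev,
      Matrix.mul_nonsing_inv_cancel_left _ _ (by rwa [Matrix.det_transpose]),
      Matrix.nonsing_inv_mul_cancel_right _ _ hSunit]
  have key : ∀ b : ιb → ℝ,
      (Sum.elim (A *ᵥ b) b - Sum.elim uhat bhat) ⬝ᵥ
          (Ψ⁻¹ *ᵥ (Sum.elim (A *ᵥ b) b - Sum.elim uhat bhat))
        = α + (b - btilde) ⬝ᵥ (Sg⁻¹ *ᵥ (b - btilde)) := by
    intro b
    set v : ιb → ℝ := b - bhat with hv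
    set e : ιb → ℝ := b - btilde with he
    have hev : e = v - R *ᵥ (Q⁻¹ *ᵥ d) := by
      funext i; simp [he, hv, hb]; ring
    set z : ιb → ℝ := Sg⁻¹ *ᵥ e with hz
    have hsub : Sum.elim (A *ᵥ b) b - Sum.elim uhat bhat = Sum.elim (A *ᵥ b - uhat) v := by
      funext i; cases i <;> simp [hv]
    have hSx : S *ᵥ Sum.elim (A *ᵥ b - uhat) v = Sum.elim d v := by
      rw [hSdef]
      funext i
      cases i with
      | inl i =>
          simp [Matrix.fromBlocks_mulVec, Matrix.mulVec_sub, Matrix.neg_mulVec, hd, hv]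
          ring
      | inr i => simp [Matrix.fromBlocks_mulVec]
    have h1 : Q *ᵥ (Q⁻¹ *ᵥ d - (Q⁻¹ * Rᵀ) *ᵥ z) + Rᵀ *ᵥ z = d := by
      rw [Matrix.mulVec_sub, Matrix.mulVec_mulVec, Matrix.mulVec_mulVec,
        Matrix.mul_nonsing_inv _ hQunit, Matrix.mul_nonsing_inv_cancel_left _ _ hQunit,
        Matrix.one_mulVec]
      abel
    have h2 : R *ᵥ (Q⁻¹ *ᵥ d - (Q⁻¹ * Rᵀ) *ᵥ z) + ΨB *ᵥ z = v := by
      have hSgz : Sg *ᵥ z = e := by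
        rw [hz, Matrix.mulVec_mulVec, Matrix.mul_nonsing_inv _ hSgunit, Matrix.one_mulVec]
      have hexp : ΨB *ᵥ z - (R * Q⁻¹ * Rᵀ) *ᵥ z = e := by
        rw [← hSgz, hSgdef, Matrix.sub_mulVec]
      have hev' : e = v - (R * Q⁻¹) *ᵥ d := by
        rw [hev, ← Matrix.mulVec_mulVec]
      simp only [Matrix.mulVec_sub, Matrix.mulVec_mulVec, ← Matrix.mul_assoc]
      rw [show (R * Q⁻¹) *ᵥ d - (R * Q⁻¹ * Rᵀ) *ᵥ z + ΨB *ᵥ z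
          = (R * Q⁻¹) *ᵥ d + (ΨB *ᵥ z - (R * Q⁻¹ * Rᵀ) *ᵥ z) from by abel, hexp, hev']
      abel
    have hy : (Matrix.fromBlocks Q Rᵀ R ΨB)⁻¹ *ᵥ Sum.elim d v
        = Sum.elim (Q⁻¹ *ᵥ d - (Q⁻¹ * Rᵀ) *ᵥ z) z := by
      have hm : Matrix.fromBlocks Q Rᵀ R ΨB *ᵥ Sum.elim (Q⁻¹ *ᵥ d - (Q⁻¹ * Rᵀ) *ᵥ z) z
          = Sum.elim d v := by
        rw [Matrix.fromBlocks_mulVec]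
        simp only [Sum.elim_comp_inl, Sum.elim_comp_inr]
        rw [h1, h2]
      rw [← hm, Matrix.mulVec_mulVec, Matrix.nonsing_inv_mul _ hZunit, Matrix.one_mulVec]
    have hcross : d ⬝ᵥ ((Q⁻¹ * Rᵀ) *ᵥ z) = (R *ᵥ (Q⁻¹ *ᵥ d)) ⬝ᵥ z := by
      rw [Matrix.dotProduct_mulVec]
      congr 1
      rw [← Matrix.mulVec_transpose, Matrix.transpose_mul, Matrix.transpose_transpose, hQs,
        ← Matrix.mulVec_mulVec]
    rw [hsub, hΨinv]
    have hmv : (Sᵀ * (Matrix.fromBlocks Q Rᵀ R ΨB)⁻¹ * S) *ᵥ Sum.elim (A *ᵥ b - uhat) v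
        = Sᵀ *ᵥ ((Matrix.fromBlocks Q Rᵀ R ΨB)⁻¹ *ᵥ (S *ᵥ Sum.elim (A *ᵥ b - uhat) v)) := by
      rw [Matrix.mulVec_mulVec, Matrix.mulVec_mulVec]
    rw [hmv, hSx, hy, Matrix.dotProduct_mulVec, Matrix.vecMul_transpose, hSx,
      sumElim_dotProduct_sumElim, dotProduct_sub, hcross, ← hα]
    have hez : e ⬝ᵥ z = v ⬝ᵥ z - (R *ᵥ (Q⁻¹ *ᵥ d)) ⬝ᵥ z := by
      rw [hev, sub_dotProduct]
    rw [hez]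
    ring
  
  set νt : ℝ := νhat + (Fintype.card ιu : ℝ) with hνt
  have hνt0 : 0 < νt := by rw [hνt]; positivity
  have hνA : 0 < νhat + α := by linarith
  have hC0 : 0 < C := by rw [hC]; exact div_pos hνA hνt0
  have hSiginv : SigTilde⁻¹ = C⁻¹ • Sg⁻¹ := by
    haveI : Invertible C := invertibleOfNonzero hC0.ne'
    rw [hSig, Matrix.inv_smul (A := Sg) C hSgunit, invOf_eq_inv]
  have hdetSig : 0 < SigTilde.det := by
    rw [hSig, Matrix.det_smul]
    exact mul_pos (pow_pos hC0 _) hSgpd.det_pos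
  have hE : -((νhat + (Fintype.card (ιu ⊕ ιb) : ℝ)) / 2)
      = -((νt + (Fintype.card ιb : ℝ)) / 2) := by
    rw [hνt]
    simp [Fintype.card_sum]
    push_cast
    ring
  have hG1 : 0 < Real.Gamma ((νhat + (Fintype.card (ιu ⊕ ιb) : ℝ)) / 2) :=
    Real.Gamma_pos_of_pos (by positivity)
  have hG2 : 0 < Real.Gamma (νhat / 2) := Real.Gamma_pos_of_pos (by positivity)
  have hG3 : 0 < Real.Gamma ((νt + (Fintype.card ιb : ℝ)) / 2) :=
    Real.Gamma_pos_of_pos (by positivity)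
  have hG4 : 0 < Real.Gamma (νt / 2) := Real.Gamma_pos_of_pos (by positivity)
  have hr1 : (0:ℝ) < (νhat * Real.pi) ^ ((Fintype.card (ιu ⊕ ιb) : ℝ) / 2) :=
    Real.rpow_pos_of_pos (by positivity) _
  have hr2 : (0:ℝ) < (νt * Real.pi) ^ ((Fintype.card ιb : ℝ) / 2) :=
    Real.rpow_pos_of_pos (by positivity) _
  have hs1 : 0 < Real.sqrt Ψ.det := Real.sqrt_pos.mpr hpd.det_pos
  have hs2 : 0 < Real.sqrt SigTilde.det := Real.sqrt_pos.mpr hdetSig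
  have h10 : (0:ℝ) < 1 + α / νhat := by
    have := div_nonneg hα0 hν.le; linarith
  have hra : (0:ℝ) < (1 + α / νhat) ^ (-((νt + (Fintype.card ιb : ℝ)) / 2)) :=
    Real.rpow_pos_of_pos h10 _
  refine ⟨Real.Gamma ((νhat + (Fintype.card (ιu ⊕ ιb) : ℝ)) / 2) /
      (Real.Gamma (νhat / 2) * (νhat * Real.pi) ^ ((Fintype.card (ιu ⊕ ιb) : ℝ) / 2) *
        Real.sqrt Ψ.det) *
      (1 + α / νhat) ^ (-((νt + (Fintype.card ιb : ℝ)) / 2)) /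
      (Real.Gamma ((νt + (Fintype.card ιb : ℝ)) / 2) /
        (Real.Gamma (νt / 2) * (νt * Real.pi) ^ ((Fintype.card ιb : ℝ) / 2) *
          Real.sqrt SigTilde.det)),
    by positivity, fun b => ?_⟩
  simp only [mtPdf]
  rw [key b, hSiginv, Matrix.smul_mulVec, dotProduct_smul, smul_eq_mul]
  set p : ℝ := (b - btilde) ⬝ᵥ (Sg⁻¹ *ᵥ (b - btilde)) with hp
  have hp0 : 0 ≤ p := by
    rw [hp]; simpa using hSgpd.inv.posSemidef.dotProduct_mulVec_nonneg (b - btilde)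
  have hX0 : (0:ℝ) ≤ 1 + C⁻¹ * p / νt := by
    have : 0 ≤ C⁻¹ * p / νt := div_nonneg (mul_nonneg (inv_nonneg.mpr hC0.le) hp0) hνt0.le
    linarith
  have hCν : C * νt = νhat + α := by
    rw [hC]; field_simp
  have hfac : 1 + (α + p) / νhat = (1 + α / νhat) * (1 + C⁻¹ * p / νt) := by
    have h1 : C⁻¹ * p / νt = p / (νhat + α) := by
      rw [← hCν]; field_simp
    rw [h1]; field_simp; ring
  rw [hfac, Real.mul_rpow h10.le hX0, hE]
  field_simp
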